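/- (Equations of reflection.) Let ξ₀, ξ₁, η₀ ∈ ℂ and r₀ ∈ ℝ with (1 − ξ₀ξ̄₀)ξ̄₁ − 2ξ̄₀ ≠ 0, and let (z₀,t₀) = P(ξ₀,η₀,r₀). Define ξ₂ = (2ξ₀ξ̄₁ + 1 − ξ₀ξ̄₀)/((1 − ξ₀ξ̄₀)ξ̄₁ − 2ξ̄₀), η₁ = ((1 + ξ̄₀ξ₁)²η₀ − (ξ₀ − ξ₁)²η̄₀ + (ξ₀ − ξ₁)(1 + ξ̄₀ξ₁)(1 + ξ₀ξ̄₀)r₀)/(1 + ξ₀ξ̄₀)², and η₂ = ((ξ̄₀ − ξ̄₁)²η₀ − (1 + ξ₀ξ̄₁)²η̄₀ + (ξ̄₀ − ξ̄₁)(1 + ξ₀ξ̄₁)(1 + ξ₀ξ̄₀)r₀)/((1 − ξ₀ξ̄₀)ξ̄₁ − 2ξ̄₀)². Then η₁ = (1/2)(z₀ − 2t₀ξ₁ − z̄₀ξ₁²) and η₂ = (1/2)(z₀ − 2t₀ξ₂ − z̄₀ξ₂²); i.e. the incident line (ξ₁,η₁) and the reflected line (ξ₂,η₂) both pass through the surface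 point (z₀,t₀), and ξ₂ is the mirror-reflected direction. -/

import Mathlib

open ComplexConjugate

/-- The point of `ℝ³ = ℂ × ℝ` on the oriented line with twistor data `(ξ, η)`
at signed distance `r` from the point of the line closest to the origin. -/
noncomputable def twistorPoint (ξ η : ℂ) (r : ℝ) : ℂ × ℝ :=
  ((2 * (η - conj η * ξ ^ 2) + 2 * ξ * (1 + ξ * conj ξ) * (r : ℂ)) / (1 + ξ * conj ξ) ^ 2,
   (((-2 * (η * conj ξ + conj η * ξ) + (1 - ξ ^ 2 * (conj ξ) ^ 2) * (r : ℂ)) /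
      (1 + ξ * conj ξ) ^ 2).re))

set_option maxHeartbeats 1000000 in
lemma aux2 (a b d e f D A : ℂ) (r : ℝ) (hden : D ≠ 0) (h1 : A ≠ 0)
    (hDv : D - ((1 - a * b) * d - 2 * b) = 0) (hAv : A - (1 + a * b) = 0) :
    ((b - d) ^ 2 * e - (1 + a * d) ^ 2 * f + (b - d) * (1 + a * d) * A * (r : ℂ)) / D ^ 2 =
    1 / 2 * ((2 * (e - f * a ^ 2) + 2 * a * A * (r : ℂ)) / A ^ 2 -
      2 * ((-2 * (e * b + f * a) + (1 - a ^ 2 * b ^ 2) * (r : ℂ)) / A ^ 2) *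
        ((2 * a * d + 1 - a * b) / D) -
      (2 * (f - e * b ^ 2) + 2 * b * A * (r : ℂ)) / A ^ 2 *
        ((2 * a * d + 1 - a * b) / D) ^ 2) := by
  have hD' := sub_eq_zero.mp hDv
  have hA' := sub_eq_zero.mp hAv
  clear hDv hAv
  field_simp
  rw [hD', hA']
  ring

set_option maxHeartbeats 1000000 in
/-- Equations of reflection: with `(ξ₀, η₀, r₀)` the normal data of the
reflecting surface at the point of reflection `(z₀, t₀)`, the incident line `(ξ₁, η₁)`
and the reflected line `(ξ₂, η₂)` given by the equations of reflection both pass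
through `(z₀, t₀)`. -/
theorem equations_of_reflection (ξ₀ ξ₁ η₀ : ℂ) (r₀ : ℝ)
    (hden : (1 - ξ₀ * conj ξ₀) * conj ξ₁ - 2 * conj ξ₀ ≠ 0)
    (z₀ : ℂ) (t₀ : ℝ) (h : (z₀, t₀) = twistorPoint ξ₀ η₀ r₀)
    (ξ₂ η₁ η₂ : ℂ)
    (hξ₂ : ξ₂ = (2 * ξ₀ * conj ξ₁ + 1 - ξ₀ * conj ξ₀) /
      ((1 - ξ₀ * conj ξ₀) * conj ξ₁ - 2 * conj ξ₀))
    (hη₁ : η₁ = ((1 + conj ξ₀ * ξ₁) ^ 2 * η₀ - (ξ₀ - ξ₁) ^ 2 * conj η₀ +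
        (ξ₀ - ξ₁) * (1 + conj ξ₀ * ξ₁) * (1 + ξ₀ * conj ξ₀) * (r₀ : ℂ)) /
      (1 + ξ₀ * conj ξ₀) ^ 2)
    (hη₂ : η₂ = ((conj ξ₀ - conj ξ₁) ^ 2 * η₀ - (1 + ξ₀ * conj ξ₁) ^ 2 * conj η₀ +
        (conj ξ₀ - conj ξ₁) * (1 + ξ₀ * conj ξ₁) * (1 + ξ₀ * conj ξ₀) * (r₀ : ℂ)) /
      ((1 - ξ₀ * conj ξ₀) * conj ξ₁ - 2 * conj ξ₀) ^ 2) :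
    η₁ = (1 / 2) * (z₀ - 2 * (t₀ : ℂ) * ξ₁ - conj z₀ * ξ₁ ^ 2) ∧
    η₂ = (1 / 2) * (z₀ - 2 * (t₀ : ℂ) * ξ₂ - conj z₀ * ξ₂ ^ 2) := by
  have h1 : (1 + ξ₀ * conj ξ₀) ≠ 0 := by
    rw [Complex.mul_conj, show (1:ℂ) + ↑(Complex.normSq ξ₀) = ((1 + Complex.normSq ξ₀ : ℝ) : ℂ) by push_cast; ring, Complex.ofReal_ne_zero]
    exact ne_of_gt (by have := Complex.normSq_nonneg ξ₀; linarith)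
  rw [twistorPoint] at h
  obtain ⟨hz, ht⟩ := Prod.mk.inj h
  have hw : (t₀ : ℂ) = (-2 * (η₀ * conj ξ₀ + conj η₀ * ξ₀) + (1 - ξ₀ ^ 2 * (conj ξ₀) ^ 2) * (r₀ : ℂ)) /
      (1 + ξ₀ * conj ξ₀) ^ 2 := by
    rw [ht]
    rw [Complex.conj_eq_iff_re.mp]
    simp only [map_div₀, map_add, map_mul, map_sub, map_neg, map_pow, map_one, map_ofNat,
      Complex.conj_conj, Complex.conj_ofReal]
    ring
  have hzc : conj z₀ = (2 * (conj η₀ - η₀ * (conj ξ₀) ^ 2) + 2 * conj ξ₀ * (1 + ξ₀ * conj ξ₀) * (r₀ : ℂ)) /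
      (1 + ξ₀ * conj ξ₀) ^ 2 := by
    rw [hz]
    simp only [map_div₀, map_add, map_mul, map_sub, map_pow, map_one, map_ofNat,
      Complex.conj_conj, Complex.conj_ofReal]
    ring
  constructor
  · rw [hη₁, hw, hzc, hz]
    field_simp
    ring
  · rw [hη₂, hξ₂, hw, hzc, hz]
    exact aux2 ξ₀ (conj ξ₀) (conj ξ₁) η₀ (conj η₀) _ _ r₀ hden h1 (by ring) (by ring)
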